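/- Let K be an isolated non-saddle compact invariant set. A point x ∉ K is dissonant if and only if x lies in the topological boundary of H(K). Consequently, the closure of H(K) equals H(K) ∪ D, where D is the set of dissonant points. -/

import Mathlib

open Set Filter Topology

variable {M : Type*}

/-- The positive semi-trajectory `γ⁺(x)`. -/
def posOrbit [TopologicalSpace M] (φ : Flow ℝ M) (x : M) : Set M :=
  {y | ∃ t : ℝ, 0 ≤ t ∧ φ t x = y}

/-- The negative semi-trajectory `γ⁻(x)`. -/
def negOrbit [TopologicalSpace M] (φ : Flow ℝ M) (x : M) : Set M :=
  {y | ∃ t : ℝ, t ≤ 0 ∧ φ t x = y}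

/-- The omega-limit set `ω(x) = ⋂_{t>0} closure (x·[t,∞))`. -/
def omegaLim [TopologicalSpace M] (φ : Flow ℝ M) (x : M) : Set M :=
  ⋂ t ∈ Set.Ioi (0:ℝ), closure {y | ∃ s : ℝ, t ≤ s ∧ φ s x = y}

/-- The negative omega-limit set `ω*(x) = ⋂_{t<0} closure (x·(-∞,t])`. -/
def alphaLim [TopologicalSpace M] (φ : Flow ℝ M) (x : M) : Set M :=
  ⋂ t ∈ Set.Iio (0:ℝ), closure {y | ∃ s : ℝ, s ≤ t ∧ φ s x = y}

/-- `K` is invariant under the flow. -/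
def FlowInvariant [TopologicalSpace M] (φ : Flow ℝ M) (K : Set M) : Prop :=
  ∀ x ∈ K, ∀ t : ℝ, φ t x ∈ K

/-- `K` is a compact invariant set which is the maximal invariant subset of some
compact neighborhood (an isolated invariant compactum). -/
def IsIsolatedInv [TopologicalSpace M] (φ : Flow ℝ M) (K : Set M) : Prop :=
  IsCompact K ∧ FlowInvariant φ K ∧
    ∃ N : Set M, IsCompact N ∧ K ⊆ interior N ∧
      ∀ x ∈ N, (∀ t : ℝ, φ t x ∈ N) → x ∈ K

/-- `K` is saddle: it admits a neighborhood `U` such that every neighborhood `V` of `K`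
contains a point whose positive and negative semi-trajectories both leave `U`. -/
def Saddle [TopologicalSpace M] (φ : Flow ℝ M) (K : Set M) : Prop :=
  ∃ U : Set M, K ⊆ interior U ∧ ∀ V : Set M, K ⊆ interior V →
    ∃ x ∈ V, ¬ posOrbit φ x ⊆ U ∧ ¬ negOrbit φ x ⊆ U

/-- `K` is non-saddle: every neighborhood `U` of `K` contains a neighborhood `V` of `K`
such that every point of `V` has `γ⁺(x) ⊆ U` or `γ⁻(x) ⊆ U`. -/
def NonSaddle [TopologicalSpace M] (φ : Flow ℝ M) (K : Set M) : Prop :=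
  ∀ U : Set M, K ⊆ interior U → ∃ V : Set M, K ⊆ interior V ∧ V ⊆ U ∧
    ∀ x ∈ V, posOrbit φ x ⊆ U ∨ negOrbit φ x ⊆ U

/-- The stable manifold (region of attraction) `A(K)`. -/
def Aset [TopologicalSpace M] (φ : Flow ℝ M) (K : Set M) : Set M :=
  {x | (omegaLim φ x).Nonempty ∧ omegaLim φ x ⊆ K}

/-- The unstable manifold (region of repulsion) `R(K)`. -/
def Rset [TopologicalSpace M] (φ : Flow ℝ M) (K : Set M) : Set M :=
  {x | (alphaLim φ x).Nonempty ∧ alphaLim φ x ⊆ K}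

/-- The region of influence `I(K) = A(K) ∪ R(K)`. -/
def Iset [TopologicalSpace M] (φ : Flow ℝ M) (K : Set M) : Set M :=
  Aset φ K ∪ Rset φ K

/-- `H(K) = A(K) ∩ R(K)`. -/
def Hset [TopologicalSpace M] (φ : Flow ℝ M) (K : Set M) : Set M :=
  Aset φ K ∩ Rset φ K

/-- The positive prolongational limit set `J⁺(x)`. -/
def Jplus [TopologicalSpace M] (φ : Flow ℝ M) (x : M) : Set M :=
  {y | ∃ (xs : ℕ → M) (ts : ℕ → ℝ), Tendsto xs atTop (𝓝 x) ∧
    Tendsto ts atTop atTop ∧ Tendsto (fun n => φ (ts n) (xs n)) atTop (𝓝 y)}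

/-- The negative prolongational limit set `J⁻(x)`. -/
def Jminus [TopologicalSpace M] (φ : Flow ℝ M) (x : M) : Set M :=
  {y | ∃ (xs : ℕ → M) (ts : ℕ → ℝ), Tendsto xs atTop (𝓝 x) ∧
    Tendsto ts atTop atBot ∧ Tendsto (fun n => φ (ts n) (xs n)) atTop (𝓝 y)}

/-- The two-sided prolongational limit set `J*(x)`. -/
def Jstar [TopologicalSpace M] (φ : Flow ℝ M) (x : M) : Set (M × M) :=
  {p | ∃ (xs : ℕ → M) (ts ss : ℕ → ℝ), Tendsto xs atTop (𝓝 x) ∧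
    Tendsto ts atTop atTop ∧ Tendsto ss atTop atBot ∧
    Tendsto (fun n => φ (ts n) (xs n)) atTop (𝓝 p.1) ∧
    Tendsto (fun n => φ (ss n) (xs n)) atTop (𝓝 p.2)}

/-- `x ∈ I(K)` is positively dissonant. -/
def PosDissonant [TopologicalSpace M] (φ : Flow ℝ M) (K : Set M) (x : M) : Prop :=
  x ∈ Iset φ K ∧ x ∉ Aset φ K ∧ (Jplus φ x ∩ K).Nonempty

/-- `x ∈ I(K)` is negatively dissonant. -/
def NegDissonant [TopologicalSpace M] (φ : Flow ℝ M) (K : Set M) (x : M) : Prop :=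
  x ∈ Iset φ K ∧ x ∉ Rset φ K ∧ (Jminus φ x ∩ K).Nonempty

/-- `x ∉ I(K)` is externally dissonant. -/
def ExtDissonant [TopologicalSpace M] (φ : Flow ℝ M) (K : Set M) (x : M) : Prop :=
  x ∉ Iset φ K ∧ (Jstar φ x ∩ K ×ˢ K).Nonempty

/-- `x` is a dissonant point of `K`. -/
def Dissonant [TopologicalSpace M] (φ : Flow ℝ M) (K : Set M) (x : M) : Prop :=
  PosDissonant φ K x ∨ NegDissonant φ K x ∨ ExtDissonant φ K x

/-- `N` is an isolating block for `K` with entrance set `Ni` and exit set `No`. -/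
structure IsolatingBlock [TopologicalSpace M] (φ : Flow ℝ M) (K N Ni No : Set M) : Prop where
  compact_N : IsCompact N
  nbhd : K ⊆ interior N
  maximal : ∀ x ∈ N, (∀ t : ℝ, φ t x ∈ N) → x ∈ K
  compact_Ni : IsCompact Ni
  compact_No : IsCompact No
  Ni_sub : Ni ⊆ frontier N
  No_sub : No ⊆ frontier N
  cover : frontier N = Ni ∪ No
  entrance : ∀ x ∈ Ni, ∃ ε > (0:ℝ), ∀ t ∈ Set.Ico (-ε) (0:ℝ), φ t x ∉ N
  exitSet : ∀ x ∈ No, ∃ δ > (0:ℝ), ∀ t ∈ Set.Ioc (0:ℝ) δ, φ t x ∉ N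
  tang_neg : ∀ x ∈ frontier N \ Ni, ∃ ε > (0:ℝ), ∀ t ∈ Set.Ico (-ε) (0:ℝ), φ t x ∈ interior N
  tang_pos : ∀ x ∈ frontier N \ No, ∃ δ > (0:ℝ), ∀ t ∈ Set.Ioc (0:ℝ) δ, φ t x ∈ interior N

/-- `p` is strongly influenced by `K`. -/
def StronglyInfluenced [TopologicalSpace M] (φ : Flow ℝ M) (K : Set M) (p : M) : Prop :=
  ∃ U ∈ 𝓝 p, ∀ V : Set M, K ⊆ interior V → ∃ T : ℝ, 0 ≤ T ∧ ∀ x ∈ U,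
    (∀ t : ℝ, T ≤ t → φ t x ∈ V) ∨ (∀ t : ℝ, t ≤ -T → φ t x ∈ V)

/-- `p` is strongly attracted by `K`. -/
def StronglyAttracted [TopologicalSpace M] (φ : Flow ℝ M) (K : Set M) (p : M) : Prop :=
  ∃ U ∈ 𝓝 p, ∀ V : Set M, K ⊆ interior V → ∃ T : ℝ, 0 ≤ T ∧ ∀ x ∈ U,
    ∀ t : ℝ, T ≤ t → φ t x ∈ V

/-- `p` is strongly repelled by `K`. -/
def StronglyRepelled [TopologicalSpace M] (φ : Flow ℝ M) (K : Set M) (p : M) : Prop :=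
  ∃ U ∈ 𝓝 p, ∀ V : Set M, K ⊆ interior V → ∃ T : ℝ, 0 ≤ T ∧ ∀ x ∈ U,
    ∀ t : ℝ, t ≤ -T → φ t x ∈ V

/-- `K` is (positively) stable. -/
def IsStable [TopologicalSpace M] (φ : Flow ℝ M) (K : Set M) : Prop :=
  ∀ U : Set M, K ⊆ interior U → ∃ V : Set M, K ⊆ interior V ∧ V ⊆ U ∧
    ∀ x ∈ V, ∀ t : ℝ, 0 ≤ t → φ t x ∈ V

/-- `K` is negatively stable. -/
def IsNegStable [TopologicalSpace M] (φ : Flow ℝ M) (K : Set M) : Prop :=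
  ∀ U : Set M, K ⊆ interior U → ∃ V : Set M, K ⊆ interior V ∧ V ⊆ U ∧
    ∀ x ∈ V, ∀ t : ℝ, t ≤ 0 → φ t x ∈ V

/-- `K` is an attractor: stable and attracting some neighborhood. -/
def IsAttractor [TopologicalSpace M] (φ : Flow ℝ M) (K : Set M) : Prop :=
  IsStable φ K ∧ ∃ W : Set M, K ⊆ interior W ∧ W ⊆ Aset φ K

/-- `K` is a repeller: negatively stable and repelling some neighborhood. -/
def IsRepeller [TopologicalSpace M] (φ : Flow ℝ M) (K : Set M) : Prop :=
  IsNegStable φ K ∧ ∃ W : Set M, K ⊆ interior W ∧ W ⊆ Rset φ K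

section Stmt12Aux

variable {M : Type*} [MetricSpace M]

lemma aux_phi_comp (φ : Flow ℝ M) (t s : ℝ) (x : M) : φ t (φ s x) = φ (t + s) x :=
  (φ.map_add t s x).symm

lemma aux_phi_neg_cancel (φ : Flow ℝ M) (t : ℝ) (x : M) : φ (-t) (φ t x) = x := by
  rw [aux_phi_comp, neg_add_cancel, φ.map_zero_apply]

lemma aux_contPt (φ : Flow ℝ M) (t : ℝ) : Continuous fun y : M => φ t y :=
  φ.continuous continuous_const continuous_id

lemma aux_mem_omegaLim_iff (φ : Flow ℝ M) {x z : M} :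
    z ∈ omegaLim φ x ↔ ∀ t : ℝ, 0 < t → z ∈ closure {y | ∃ s : ℝ, t ≤ s ∧ φ s x = y} := by
  simp [omegaLim, Set.mem_iInter, Set.mem_Ioi]

lemma aux_mem_alphaLim_iff (φ : Flow ℝ M) {x z : M} :
    z ∈ alphaLim φ x ↔ ∀ t : ℝ, t < 0 → z ∈ closure {y | ∃ s : ℝ, s ≤ t ∧ φ s x = y} := by
  simp [alphaLim, Set.mem_iInter, Set.mem_Iio]

lemma aux_mem_omegaLim_of_seq (φ : Flow ℝ M) {x z : M} (u : ℕ → ℝ)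
    (hu : Tendsto u atTop atTop)
    (hc : Tendsto (fun n => φ (u n) x) atTop (𝓝 z)) : z ∈ omegaLim φ x := by
  rw [aux_mem_omegaLim_iff]
  intro t _
  apply mem_closure_of_tendsto hc
  filter_upwards [hu.eventually_ge_atTop t] with n hn
  exact ⟨u n, hn, rfl⟩

lemma aux_mem_alphaLim_of_seq (φ : Flow ℝ M) {x z : M} (u : ℕ → ℝ)
    (hu : Tendsto u atTop atBot)
    (hc : Tendsto (fun n => φ (u n) x) atTop (𝓝 z)) : z ∈ alphaLim φ x := by
  rw [aux_mem_alphaLim_iff]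
  intro t _
  apply mem_closure_of_tendsto hc
  filter_upwards [hu.eventually_le_atBot t] with n hn
  exact ⟨u n, hn, rfl⟩

lemma aux_omega_frequently (φ : Flow ℝ M) {x z : M} (hz : z ∈ omegaLim φ x) {O : Set M}
    (hO : IsOpen O) (hzO : z ∈ O) (T : ℝ) : ∃ t : ℝ, T ≤ t ∧ φ t x ∈ O := by
  have h := (aux_mem_omegaLim_iff φ).1 hz (max T 1) (lt_of_lt_of_le one_pos (le_max_right _ _))
  rcases _root_.mem_closure_iff.1 h O hO hzO with ⟨y, hyO, s, hs, rfl⟩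
  exact ⟨s, le_trans (le_max_left _ _) hs, hyO⟩

lemma aux_alpha_frequently (φ : Flow ℝ M) {x z : M} (hz : z ∈ alphaLim φ x) {O : Set M}
    (hO : IsOpen O) (hzO : z ∈ O) (T : ℝ) : ∃ t : ℝ, t ≤ T ∧ φ t x ∈ O := by
  have h := (aux_mem_alphaLim_iff φ).1 hz (min T (-1)) (lt_of_le_of_lt (min_le_right _ _) (by norm_num))
  rcases _root_.mem_closure_iff.1 h O hO hzO with ⟨y, hyO, s, hs, rfl⟩
  exact ⟨s, le_trans hs (min_le_left _ _), hyO⟩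

lemma aux_omegaLim_inv (φ : Flow ℝ M) {x z : M} (hz : z ∈ omegaLim φ x) (t : ℝ) :
    φ t z ∈ omegaLim φ x := by
  rw [aux_mem_omegaLim_iff] at hz ⊢
  intro r hr
  have h1 := hz (r + |t| + 1) (by positivity)
  have h2 : φ t z ∈ closure ((fun y => φ t y) '' {y | ∃ s : ℝ, r + |t| + 1 ≤ s ∧ φ s x = y}) :=
    image_closure_subset_closure_image (aux_contPt φ t) ⟨z, h1, rfl⟩
  refine closure_mono ?_ h2
  rintro - ⟨-, ⟨s, hs, rfl⟩, rfl⟩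
  refine ⟨t + s, ?_, (aux_phi_comp φ t s x).symm⟩
  have := neg_abs_le t
  linarith

lemma aux_alphaLim_inv (φ : Flow ℝ M) {x z : M} (hz : z ∈ alphaLim φ x) (t : ℝ) :
    φ t z ∈ alphaLim φ x := by
  rw [aux_mem_alphaLim_iff] at hz ⊢
  intro r hr
  have h1 := hz (r - |t| - 1) (by have := abs_nonneg t; linarith)
  have h2 : φ t z ∈ closure ((fun y => φ t y) '' {y | ∃ s : ℝ, s ≤ r - |t| - 1 ∧ φ s x = y}) :=
    image_closure_subset_closure_image (aux_contPt φ t) ⟨z, h1, rfl⟩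
  refine closure_mono ?_ h2
  rintro - ⟨-, ⟨s, hs, rfl⟩, rfl⟩
  refine ⟨t + s, ?_, (aux_phi_comp φ t s x).symm⟩
  have := le_abs_self t
  linarith

lemma aux_crossing {f : ℝ → M} (hf : Continuous f) {N : Set M} (hN : IsClosed N)
    {a b : ℝ} (hab : a ≤ b) (ha : f a ∈ N) (hb : f b ∉ N) :
    ∃ c ∈ Set.Icc a b, f c ∈ frontier N ∧ ∀ t ∈ Set.Icc a c, f t ∈ N := by
  set A : Set ℝ := {s | s ∈ Set.Icc a b ∧ ∀ t ∈ Set.Icc a s, f t ∈ N} with hA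
  have haA : a ∈ A := ⟨⟨le_refl a, hab⟩, fun t ht => by
    have h : t = a := le_antisymm ht.2 ht.1
    rw [h]; exact ha⟩
  have hane : A.Nonempty := ⟨a, haA⟩
  have hbdd : BddAbove A := ⟨b, fun s hs => hs.1.2⟩
  set c := sSup A with hc
  have hac : a ≤ c := le_csSup hbdd haA
  have hcb : c ≤ b := csSup_le hane fun s hs => hs.1.2
  have hmidN : ∀ t, a ≤ t → t < c → f t ∈ N := by
    intro t h1 h2
    obtain ⟨s, hsA, hts⟩ := exists_lt_of_lt_csSup hane h2
    exact hsA.2 t ⟨h1, le_of_lt hts⟩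
  have hfcN : f c ∈ N := by
    have h1 : f c ∈ closure (f '' A) :=
      image_closure_subset_closure_image hf ⟨c, csSup_mem_closure hane hbdd, rfl⟩
    have h2 : f '' A ⊆ N := by rintro - ⟨s, hsA, rfl⟩; exact hsA.2 s ⟨hsA.1.1, le_refl _⟩
    exact hN.closure_subset_iff.2 h2 h1
  have hall : ∀ t ∈ Set.Icc a c, f t ∈ N := by
    intro t ht
    rcases eq_or_lt_of_le ht.2 with h | h
    · rw [h]; exact hfcN
    · exact hmidN t ht.1 h
  refine ⟨c, ⟨hac, hcb⟩, ?_, hall⟩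
  rw [hN.frontier_eq]
  refine ⟨hfcN, fun hint => ?_⟩
  have hcb' : c < b := by
    rcases eq_or_lt_of_le hcb with h | h
    · exact absurd (h ▸ hfcN) hb
    · exact h
  have hcnb : f ⁻¹' interior N ∈ 𝓝 c := (isOpen_interior.preimage hf).mem_nhds hint
  obtain ⟨ε, hε, hball⟩ := Metric.mem_nhds_iff.1 hcnb
  set c' := min (c + ε/2) b with hc'
  have hcc' : c < c' := lt_min (by linarith) hcb'
  have hc'A : c' ∈ A := by
    refine ⟨⟨hac.trans (le_of_lt hcc'), min_le_right _ _⟩, fun t ht => ?_⟩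
    rcases le_or_gt t c with h | h
    · exact hall t ⟨ht.1, h⟩
    · have hmem : t ∈ Metric.ball c ε := by
        rw [Metric.mem_ball, Real.dist_eq, abs_lt]
        have h1 : t ≤ c' := ht.2
        have h2 : c' ≤ c + ε/2 := min_le_left _ _
        constructor <;> [linarith; linarith]
      exact interior_subset (hball hmem)
  exact absurd (le_csSup hbdd hc'A) (not_le.2 hcc')

lemma aux_tube (φ : Flow ℝ M) {x : M} {a b : ℝ} {O : Set M} (hO : IsOpen O)
    (h : ∀ t ∈ Set.Icc a b, φ t x ∈ O) : ∀ᶠ y in 𝓝 x, ∀ t ∈ Set.Icc a b, φ t y ∈ O := by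
  apply (isCompact_Icc (a := a) (b := b)).eventually_forall_of_forall_eventually
  intro t ht
  have hcont : Continuous fun z : M × ℝ => φ z.2 z.1 := φ.continuous continuous_snd continuous_fst
  have : ContinuousAt (fun z : M × ℝ => φ z.2 z.1) (x, t) := hcont.continuousAt
  exact this.preimage_mem_nhds (hO.mem_nhds (h t ht))
lemma aux_mem_Aset_of_eventually (φ : Flow ℝ M) {K N C : Set M}
    (hmax : ∀ x ∈ N, (∀ t : ℝ, φ t x ∈ N) → x ∈ K)
    (hC : IsCompact C) (hCN : C ⊆ N) {x : M} {t₀ : ℝ}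
    (h : ∀ t : ℝ, t₀ ≤ t → φ t x ∈ C) : x ∈ Aset φ K := by
  have hmem : ∀ n : ℕ, φ (t₀ + n) x ∈ C := fun n => h _ (le_add_of_nonneg_right (Nat.cast_nonneg n))
  obtain ⟨z, hzC, g, hg, hgc⟩ := hC.tendsto_subseq hmem
  have hu : Tendsto (fun n : ℕ => t₀ + ((g n : ℕ) : ℝ)) atTop atTop :=
    tendsto_atTop_add_const_left _ _ (tendsto_natCast_atTop_atTop.comp hg.tendsto_atTop)
  have hz : z ∈ omegaLim φ x := aux_mem_omegaLim_of_seq φ _ hu hgc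
  have hsub : omegaLim φ x ⊆ C := by
    intro w hw
    have h1 : w ∈ closure {y | ∃ s : ℝ, max t₀ 1 ≤ s ∧ φ s x = y} :=
      (aux_mem_omegaLim_iff φ).1 hw _ (lt_of_lt_of_le one_pos (le_max_right _ _))
    have h2 : {y | ∃ s : ℝ, max t₀ 1 ≤ s ∧ φ s x = y} ⊆ C := by
      rintro - ⟨s, hs, rfl⟩; exact h s ((le_max_left _ _).trans hs)
    exact hC.isClosed.closure_subset_iff.2 h2 h1
  exact ⟨⟨z, hz⟩, fun w hw => hmax w (hCN (hsub hw)) fun t => hCN (hsub (aux_omegaLim_inv φ hw t))⟩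

lemma aux_mem_Rset_of_eventually (φ : Flow ℝ M) {K N C : Set M}
    (hmax : ∀ x ∈ N, (∀ t : ℝ, φ t x ∈ N) → x ∈ K)
    (hC : IsCompact C) (hCN : C ⊆ N) {x : M} {t₀ : ℝ}
    (h : ∀ t : ℝ, t ≤ t₀ → φ t x ∈ C) : x ∈ Rset φ K := by
  have hmem : ∀ n : ℕ, φ (t₀ - n) x ∈ C := fun n => h _ (by
    have : (0:ℝ) ≤ n := Nat.cast_nonneg n
    linarith)
  obtain ⟨z, hzC, g, hg, hgc⟩ := hC.tendsto_subseq hmem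
  have hu : Tendsto (fun n : ℕ => t₀ - ((g n : ℕ) : ℝ)) atTop atBot := by
    apply tendsto_atBot_add_const_left
    exact tendsto_neg_atBot_iff.2 (tendsto_natCast_atTop_atTop.comp hg.tendsto_atTop)
  have hz : z ∈ alphaLim φ x := aux_mem_alphaLim_of_seq φ _ hu hgc
  have hsub : alphaLim φ x ⊆ C := by
    intro w hw
    have h1 : w ∈ closure {y | ∃ s : ℝ, s ≤ min t₀ (-1) ∧ φ s x = y} :=
      (aux_mem_alphaLim_iff φ).1 hw _ (lt_of_le_of_lt (min_le_right _ _) (by norm_num))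
    have h2 : {y | ∃ s : ℝ, s ≤ min t₀ (-1) ∧ φ s x = y} ⊆ C := by
      rintro - ⟨s, hs, rfl⟩; exact h s (hs.trans (min_le_left _ _))
    exact hC.isClosed.closure_subset_iff.2 h2 h1
  exact ⟨⟨z, hz⟩, fun w hw => hmax w (hCN (hsub hw)) fun t => hCN (hsub (aux_alphaLim_inv φ hw t))⟩

lemma aux_eventually_forward (φ : Flow ℝ M) {x : M} {W : Set M} (hW : IsCompact W)
    (hne : (omegaLim φ x).Nonempty) (hsub : omegaLim φ x ⊆ interior W) :
    ∃ T : ℝ, ∀ t : ℝ, T ≤ t → φ t x ∈ W := by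
  by_contra hcon
  push_neg at hcon
  obtain ⟨z, hz⟩ := hne
  have hfr : ∀ n : ℕ, ∃ c : ℝ, (n : ℝ) ≤ c ∧ φ c x ∈ frontier W := by
    intro n
    obtain ⟨r, hrn, hrO⟩ := aux_omega_frequently φ hz isOpen_interior (hsub hz) n
    obtain ⟨t, hrt, htW⟩ := hcon r
    obtain ⟨c, hc, hcf, -⟩ := aux_crossing (φ.continuous continuous_id continuous_const)
      hW.isClosed hrt (interior_subset hrO) htW
    exact ⟨c, hrn.trans hc.1, hcf⟩
  choose cs hcs1 hcs2 using hfr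
  have hfrsub : frontier W ⊆ W := by rw [hW.isClosed.frontier_eq]; exact diff_subset
  have hfrC : IsCompact (frontier W) := hW.of_isClosed_subset isClosed_frontier hfrsub
  obtain ⟨z₀, hz₀f, g, hg, hgc⟩ := hfrC.tendsto_subseq hcs2
  have hcg : Tendsto (fun n => cs (g n)) atTop atTop := by
    apply tendsto_atTop_mono (fun n => (hcs1 (g n)).trans' (Nat.cast_le.2 (hg.le_apply)))
    exact tendsto_natCast_atTop_atTop
  have hz₀ : z₀ ∈ omegaLim φ x := aux_mem_omegaLim_of_seq φ (fun n => cs (g n)) hcg hgc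
  exact hz₀f.2 (hsub hz₀)

lemma aux_eventually_backward (φ : Flow ℝ M) {x : M} {W : Set M} (hW : IsCompact W)
    (hne : (alphaLim φ x).Nonempty) (hsub : alphaLim φ x ⊆ interior W) :
    ∃ T : ℝ, ∀ t : ℝ, t ≤ T → φ t x ∈ W := by
  by_contra hcon
  push_neg at hcon
  obtain ⟨z, hz⟩ := hne
  have hfr : ∀ n : ℕ, ∃ c : ℝ, c ≤ -(n : ℝ) ∧ φ c x ∈ frontier W := by
    intro n
    obtain ⟨r, hrn, hrO⟩ := aux_alpha_frequently φ hz isOpen_interior (hsub hz) (-(n:ℝ))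
    obtain ⟨t, hrt, htW⟩ := hcon r
    obtain ⟨c, hc, hcf, -⟩ := aux_crossing
      (f := fun s : ℝ => φ (-s) x)
      (φ.continuous continuous_neg continuous_const)
      hW.isClosed (show -r ≤ -t by linarith) (by simpa using interior_subset hrO)
      (by simpa using htW)
    refine ⟨-c, by have := hc.1; linarith, by simpa using hcf⟩
  choose cs hcs1 hcs2 using hfr
  have hfrsub : frontier W ⊆ W := by rw [hW.isClosed.frontier_eq]; exact diff_subset
  have hfrC : IsCompact (frontier W) := hW.of_isClosed_subset isClosed_frontier hfrsub
  obtain ⟨z₀, hz₀f, g, hg, hgc⟩ := hfrC.tendsto_subseq hcs2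
  have hcg : Tendsto (fun n => cs (g n)) atTop atBot := by
    apply tendsto_atBot_mono (fun n => (hcs1 (g n)).trans (neg_le_neg (Nat.cast_le.2 (hg.le_apply))))
    exact tendsto_neg_atBot_iff.2 tendsto_natCast_atTop_atTop
  have hz₀ : z₀ ∈ alphaLim φ x := aux_mem_alphaLim_of_seq φ (fun n => cs (g n)) hcg hgc
  exact hz₀f.2 (hsub hz₀)
lemma aux_approxR (φ : Flow ℝ M) {K : Set M} {h : ℕ → M}
    (hhR : ∀ n, h n ∈ Rset φ K) (n : ℕ) :
    ∃ z ∈ K, ∃ s : ℝ, s ≤ -((n:ℝ)+1) ∧ dist (φ s (h n)) z < 1/((n:ℝ)+1) := by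
  obtain ⟨z, hz⟩ := (hhR n).1
  refine ⟨z, (hhR n).2 hz, ?_⟩
  have h1 : z ∈ closure {y | ∃ s : ℝ, s ≤ -((n:ℝ)+1) ∧ φ s (h n) = y} :=
    (aux_mem_alphaLim_iff φ).1 hz _ (by linarith [(Nat.cast_nonneg n : (0:ℝ) ≤ n)])
  obtain ⟨y, hy1, hy2⟩ := Metric.mem_closure_iff.1 h1 _ (by positivity : (0:ℝ) < 1/((n:ℝ)+1))
  obtain ⟨s, hs, rfl⟩ := hy1
  exact ⟨s, hs, by rwa [dist_comm]⟩

lemma aux_approxA (φ : Flow ℝ M) {K : Set M} {h : ℕ → M}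
    (hhA : ∀ n, h n ∈ Aset φ K) (n : ℕ) :
    ∃ z ∈ K, ∃ s : ℝ, ((n:ℝ)+1) ≤ s ∧ dist (φ s (h n)) z < 1/((n:ℝ)+1) := by
  obtain ⟨z, hz⟩ := (hhA n).1
  refine ⟨z, (hhA n).2 hz, ?_⟩
  have h1 : z ∈ closure {y | ∃ s : ℝ, ((n:ℝ)+1) ≤ s ∧ φ s (h n) = y} :=
    (aux_mem_omegaLim_iff φ).1 hz _ (by positivity)
  obtain ⟨y, hy1, hy2⟩ := Metric.mem_closure_iff.1 h1 _ (by positivity : (0:ℝ) < 1/((n:ℝ)+1))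
  obtain ⟨s, hs, rfl⟩ := hy1
  exact ⟨s, hs, by rwa [dist_comm]⟩

lemma aux_exists_Jminus (φ : Flow ℝ M) {K : Set M} (hK : IsCompact K) {x : M} {h : ℕ → M}
    (hhx : Tendsto h atTop (𝓝 x)) (hhR : ∀ n, h n ∈ Rset φ K) :
    (Jminus φ x ∩ K).Nonempty := by
  choose zs hzs ss hss hd using aux_approxR φ hhR
  obtain ⟨z, hzK, g, hg, hgz⟩ := hK.tendsto_subseq hzs
  have hb : Tendsto (fun j : ℕ => -((j:ℝ)+1)) atTop atBot :=
    tendsto_neg_atBot_iff.2 (tendsto_atTop_add_const_right _ 1 tendsto_natCast_atTop_atTop)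
  have hts : Tendsto (fun j => ss (g j)) atTop atBot := by
    apply tendsto_atBot_mono _ hb
    intro j
    exact (hss (g j)).trans (by
      have : ((j:ℝ)) ≤ (g j : ℝ) := Nat.cast_le.2 hg.le_apply
      linarith)
  have hconv : Tendsto (fun j => φ (ss (g j)) (h (g j))) atTop (𝓝 z) := by
    apply hgz.congr_dist
    apply squeeze_zero (fun j => dist_nonneg) (g := fun j : ℕ => 1/((j:ℝ)+1))
    · intro j
      rw [dist_comm]
      refine (hd (g j)).le.trans (one_div_le_one_div_of_le (by positivity) ?_)
      have : ((j:ℝ)) ≤ (g j : ℝ) := Nat.cast_le.2 hg.le_apply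
      linarith
    · exact tendsto_one_div_add_atTop_nhds_zero_nat
  exact ⟨z, ⟨fun j => h (g j), fun j => ss (g j), hhx.comp hg.tendsto_atTop, hts, hconv⟩, hzK⟩

lemma aux_exists_Jplus (φ : Flow ℝ M) {K : Set M} (hK : IsCompact K) {x : M} {h : ℕ → M}
    (hhx : Tendsto h atTop (𝓝 x)) (hhA : ∀ n, h n ∈ Aset φ K) :
    (Jplus φ x ∩ K).Nonempty := by
  choose zs hzs ss hss hd using aux_approxA φ hhA
  obtain ⟨z, hzK, g, hg, hgz⟩ := hK.tendsto_subseq hzs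
  have hb : Tendsto (fun j : ℕ => ((j:ℝ)+1)) atTop atTop :=
    tendsto_atTop_add_const_right _ 1 tendsto_natCast_atTop_atTop
  have hts : Tendsto (fun j => ss (g j)) atTop atTop := by
    apply tendsto_atTop_mono _ hb
    intro j
    refine le_trans ?_ (hss (g j))
    have : ((j:ℝ)) ≤ (g j : ℝ) := Nat.cast_le.2 hg.le_apply
    linarith
  have hconv : Tendsto (fun j => φ (ss (g j)) (h (g j))) atTop (𝓝 z) := by
    apply hgz.congr_dist
    apply squeeze_zero (fun j => dist_nonneg) (g := fun j : ℕ => 1/((j:ℝ)+1))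
    · intro j
      rw [dist_comm]
      refine (hd (g j)).le.trans (one_div_le_one_div_of_le (by positivity) ?_)
      have : ((j:ℝ)) ≤ (g j : ℝ) := Nat.cast_le.2 hg.le_apply
      linarith
    · exact tendsto_one_div_add_atTop_nhds_zero_nat
  exact ⟨z, ⟨fun j => h (g j), fun j => ss (g j), hhx.comp hg.tendsto_atTop, hts, hconv⟩, hzK⟩

lemma aux_exists_Jstar (φ : Flow ℝ M) {K : Set M} (hK : IsCompact K) {x : M} {h : ℕ → M}
    (hhx : Tendsto h atTop (𝓝 x)) (hhH : ∀ n, h n ∈ Hset φ K) :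
    (Jstar φ x ∩ K ×ˢ K).Nonempty := by
  choose zsA hzsA tsA htsA hdA using aux_approxA φ (fun n => (hhH n).1)
  choose zsR hzsR tsR htsR hdR using aux_approxR φ (fun n => (hhH n).2)
  obtain ⟨w, hwK, g1, hg1, hg1w⟩ := hK.tendsto_subseq hzsA
  obtain ⟨z, hzK, g2, hg2, hg2z⟩ := hK.tendsto_subseq (fun j => hzsR (g1 j))
  set g : ℕ → ℕ := fun j => g1 (g2 j) with hgdef
  have hgmono : StrictMono g := hg1.comp hg2
  have hjle : ∀ j : ℕ, ((j:ℝ)) ≤ (g j : ℝ) := fun j => Nat.cast_le.2 hgmono.le_apply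
  have hwconv : Tendsto (fun j => zsA (g j)) atTop (𝓝 w) := hg1w.comp hg2.tendsto_atTop
  have hbA : Tendsto (fun j : ℕ => ((j:ℝ)+1)) atTop atTop :=
    tendsto_atTop_add_const_right _ 1 tendsto_natCast_atTop_atTop
  have htsup : Tendsto (fun j => tsA (g j)) atTop atTop := by
    apply tendsto_atTop_mono _ hbA
    intro j
    refine le_trans ?_ (htsA (g j))
    have := hjle j; linarith
  have htsdn : Tendsto (fun j => tsR (g j)) atTop atBot := by
    apply tendsto_atBot_mono _ (tendsto_neg_atBot_iff.2 hbA)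
    intro j
    exact (htsR (g j)).trans (by have := hjle j; linarith)
  have hdzero : Tendsto (fun j : ℕ => 1/((j:ℝ)+1)) atTop (𝓝 0) :=
    tendsto_one_div_add_atTop_nhds_zero_nat
  have hconvA : Tendsto (fun j => φ (tsA (g j)) (h (g j))) atTop (𝓝 w) := by
    apply hwconv.congr_dist
    apply squeeze_zero (fun j => dist_nonneg) (g := fun j : ℕ => 1/((j:ℝ)+1)) _ hdzero
    intro j
    rw [dist_comm]
    refine (hdA (g j)).le.trans (one_div_le_one_div_of_le (by positivity) ?_)
    have := hjle j; linarith
  have hconvR : Tendsto (fun j => φ (tsR (g j)) (h (g j))) atTop (𝓝 z) := by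
    apply (hg2z.congr_dist)
    apply squeeze_zero (fun j => dist_nonneg) (g := fun j : ℕ => 1/((j:ℝ)+1)) _ hdzero
    intro j
    rw [dist_comm]
    refine (hdR (g j)).le.trans (one_div_le_one_div_of_le (by positivity) ?_)
    have := hjle j; linarith
  exact ⟨(w, z), ⟨fun j => h (g j), fun j => tsA (g j), fun j => tsR (g j),
    hhx.comp hgmono.tendsto_atTop, htsup, htsdn, hconvA, hconvR⟩, hwK, hzK⟩
lemma aux_case_forward [LocallyCompactSpace M] (φ : Flow ℝ M) {K : Set M}
    (hIso : IsIsolatedInv φ K) (hNS : NonSaddle φ K) {x : M}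
    (hxA : x ∈ Aset φ K) (hxK : x ∉ K) {y : ℕ → M}
    (hy : Tendsto y atTop (𝓝 x)) (hyA : ∀ n, y n ∉ Aset φ K) : False := by
  obtain ⟨hKc, hKinv, N, hNc, hKN, hmax⟩ := hIso
  obtain ⟨N₂, hN₂c, hKN₂, hN₂N⟩ := exists_compact_between hKc isOpen_interior hKN
  have hopen : IsOpen (interior N \ {x}) := isOpen_interior.sdiff isClosed_singleton
  have hKsub : K ⊆ interior N \ {x} := fun k hk =>
    ⟨hKN hk, fun hkx => hxK (Set.mem_singleton_iff.1 hkx ▸ hk)⟩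
  obtain ⟨U₁, hU₁c, hKU₁, hU₁sub⟩ := exists_compact_between hKc hopen hKsub
  obtain ⟨V₁, hKV₁, hV₁U₁, hdich⟩ := hNS U₁ hKU₁
  have hxAsub : omegaLim φ x ⊆ interior N₂ := fun w hw => hKN₂ (hxA.2 hw)
  obtain ⟨T, hT⟩ := aux_eventually_forward φ hN₂c hxA.1 hxAsub
  -- pass to a tail of y so that φ T (y n) ∈ interior N always
  have hE1 : ∀ᶠ n in atTop, φ T (y n) ∈ interior N := by
    have hten : Tendsto (fun n => φ T (y n)) atTop (𝓝 (φ T x)) :=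
      ((aux_contPt φ T).tendsto x).comp hy
    exact hten.eventually_mem (isOpen_interior.mem_nhds (hN₂N (hT T le_rfl)))
  obtain ⟨n₁, hn₁⟩ := eventually_atTop.1 hE1
  set Y : ℕ → M := fun j => y (j + n₁) with hYdef
  have hY : Tendsto Y atTop (𝓝 x) := hy.comp (tendsto_add_atTop_nat n₁)
  have hYA : ∀ j, Y j ∉ Aset φ K := fun j => hyA _
  have hYE1 : ∀ j, φ T (Y j) ∈ interior N := fun j => hn₁ _ (Nat.le_add_left n₁ j)
  -- frontier crossing times
  have hcross : ∀ j, ∃ c : ℝ, T ≤ c ∧ φ c (Y j) ∈ frontier N ∧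
      ∀ t ∈ Set.Icc T c, φ t (Y j) ∈ N := by
    intro j
    have hexit : ∃ τ : ℝ, T ≤ τ ∧ φ τ (Y j) ∉ N := by
      by_contra hcon
      push_neg at hcon
      exact hYA j (aux_mem_Aset_of_eventually φ hmax hNc (subset_refl N) hcon)
    obtain ⟨τ, hτ1, hτ2⟩ := hexit
    obtain ⟨c, hc1, hc2, hc3⟩ := aux_crossing (φ.continuous continuous_id continuous_const)
      hNc.isClosed hτ1 (interior_subset (hYE1 j)) hτ2
    exact ⟨c, hc1.1, hc2, hc3⟩
  choose cs hcs1 hcs2 hcs3 using hcross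
  -- cs tends to infinity
  have hcsT : Tendsto cs atTop atTop := by
    rw [tendsto_atTop]
    intro S
    have htube : ∀ᶠ w in 𝓝 x, ∀ t ∈ Set.Icc T (max T S), φ t w ∈ interior N :=
      aux_tube φ isOpen_interior (fun t ht => hN₂N (hT t ht.1))
    filter_upwards [hY.eventually htube] with j hj
    by_contra hSc
    push_neg at hSc
    have hmem : cs j ∈ Set.Icc T (max T S) := ⟨hcs1 j, le_max_of_le_right hSc.le⟩
    exact (hcs2 j).2 (hj _ hmem)
  -- limit point on the frontier
  have hfrsub : frontier N ⊆ N := by rw [hNc.isClosed.frontier_eq]; exact diff_subset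
  have hfrC : IsCompact (frontier N) := hNc.of_isClosed_subset isClosed_frontier hfrsub
  obtain ⟨p, hpf, g, hg, hpg⟩ := hfrC.tendsto_subseq (x := fun j => φ (cs j) (Y j)) hcs2
  have hcsg : Tendsto (fun j => cs (g j)) atTop atTop := hcsT.comp hg.tendsto_atTop
  -- negative orbit of p lies in N
  have hneg : ∀ s : ℝ, s ≤ 0 → φ s p ∈ N := by
    intro s hs
    have hten : Tendsto (fun j => φ s (φ (cs (g j)) (Y (g j)))) atTop (𝓝 (φ s p)) :=
      ((aux_contPt φ s).tendsto p).comp hpg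
    refine hNc.isClosed.mem_of_tendsto hten ?_
    filter_upwards [hcsg.eventually_ge_atTop (T - s)] with j hj
    rw [aux_phi_comp]
    exact hcs3 (g j) _ ⟨by linarith, by linarith⟩
  have hpR : p ∈ Rset φ K :=
    aux_mem_Rset_of_eventually φ hmax hNc (subset_refl N) (t₀ := 0) hneg
  -- a time s* ≤ 0 where p enters interior V₁
  obtain ⟨z, hz⟩ := hpR.1
  obtain ⟨s', hs'0, hs'V⟩ := aux_alpha_frequently φ hz isOpen_interior (hKV₁ (hpR.2 hz)) 0
  have hqten : Tendsto (fun j => φ s' (φ (cs (g j)) (Y (g j)))) atTop (𝓝 (φ s' p)) :=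
    ((aux_contPt φ s').tendsto p).comp hpg
  have hqV : ∀ᶠ j in atTop, φ s' (φ (cs (g j)) (Y (g j))) ∈ V₁ :=
    (hqten.eventually_mem (isOpen_interior.mem_nhds hs'V)).mono fun j hj => interior_subset hj
  have hfinal : ∀ᶠ j in atTop, Y (g j) ∈ U₁ := by
    filter_upwards [hqV, hcsg.eventually_ge_atTop (-s')] with j hjV hjc
    rcases hdich _ hjV with hpos | hneg'
    · exfalso
      have hpq : φ (-s') (φ s' (φ (cs (g j)) (Y (g j)))) ∈
          posOrbit φ (φ s' (φ (cs (g j)) (Y (g j)))) := ⟨-s', by linarith, rfl⟩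
      have heq : φ (-s') (φ s' (φ (cs (g j)) (Y (g j)))) = φ (cs (g j)) (Y (g j)) :=
        aux_phi_neg_cancel φ s' _
      have hmem : φ (cs (g j)) (Y (g j)) ∈ U₁ := by rw [← heq]; exact hpos hpq
      exact (hcs2 (g j)).2 ((hU₁sub hmem).1)
    · have hYq : Y (g j) = φ (-(s' + cs (g j))) (φ s' (φ (cs (g j)) (Y (g j)))) := by
        rw [aux_phi_comp, aux_phi_comp,
          show -(s' + cs (g j)) + s' + cs (g j) = 0 by ring, φ.map_zero_apply]
      have hmem : φ (-(s' + cs (g j))) (φ s' (φ (cs (g j)) (Y (g j)))) ∈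
          negOrbit φ (φ s' (φ (cs (g j)) (Y (g j)))) := ⟨-(s' + cs (g j)), by linarith, rfl⟩
      rw [hYq]
      exact hneg' hmem
  have hxU : x ∈ U₁ := hU₁c.isClosed.mem_of_tendsto (hY.comp hg.tendsto_atTop) hfinal
  exact (hU₁sub hxU).2 rfl
lemma aux_case_backward [LocallyCompactSpace M] (φ : Flow ℝ M) {K : Set M}
    (hIso : IsIsolatedInv φ K) (hNS : NonSaddle φ K) {x : M}
    (hxR : x ∈ Rset φ K) (hxK : x ∉ K) {y : ℕ → M}
    (hy : Tendsto y atTop (𝓝 x)) (hyR : ∀ n, y n ∉ Rset φ K) : False := by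
  obtain ⟨hKc, hKinv, N, hNc, hKN, hmax⟩ := hIso
  obtain ⟨N₂, hN₂c, hKN₂, hN₂N⟩ := exists_compact_between hKc isOpen_interior hKN
  have hopen : IsOpen (interior N \ {x}) := isOpen_interior.sdiff isClosed_singleton
  have hKsub : K ⊆ interior N \ {x} := fun k hk =>
    ⟨hKN hk, fun hkx => hxK (Set.mem_singleton_iff.1 hkx ▸ hk)⟩
  obtain ⟨U₁, hU₁c, hKU₁, hU₁sub⟩ := exists_compact_between hKc hopen hKsub
  obtain ⟨V₁, hKV₁, hV₁U₁, hdich⟩ := hNS U₁ hKU₁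
  have hxRsub : alphaLim φ x ⊆ interior N₂ := fun w hw => hKN₂ (hxR.2 hw)
  obtain ⟨T, hT⟩ := aux_eventually_backward φ hN₂c hxR.1 hxRsub
  have hE1 : ∀ᶠ n in atTop, φ T (y n) ∈ interior N := by
    have hten : Tendsto (fun n => φ T (y n)) atTop (𝓝 (φ T x)) :=
      ((aux_contPt φ T).tendsto x).comp hy
    exact hten.eventually_mem (isOpen_interior.mem_nhds (hN₂N (hT T le_rfl)))
  obtain ⟨n₁, hn₁⟩ := eventually_atTop.1 hE1
  set Y : ℕ → M := fun j => y (j + n₁) with hYdef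
  have hY : Tendsto Y atTop (𝓝 x) := hy.comp (tendsto_add_atTop_nat n₁)
  have hYR : ∀ j, Y j ∉ Rset φ K := fun j => hyR _
  have hYE1 : ∀ j, φ T (Y j) ∈ interior N := fun j => hn₁ _ (Nat.le_add_left n₁ j)
  have hcross : ∀ j, ∃ c : ℝ, -T ≤ c ∧ φ (-c) (Y j) ∈ frontier N ∧
      ∀ s ∈ Set.Icc (-T) c, φ (-s) (Y j) ∈ N := by
    intro j
    have hexit : ∃ τ : ℝ, τ ≤ T ∧ φ τ (Y j) ∉ N := by
      by_contra hcon
      push_neg at hcon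
      exact hYR j (aux_mem_Rset_of_eventually φ hmax hNc (subset_refl N) hcon)
    obtain ⟨τ, hτ1, hτ2⟩ := hexit
    obtain ⟨c, hc1, hc2, hc3⟩ := aux_crossing
      (f := fun s : ℝ => φ (-s) (Y j)) (φ.continuous continuous_neg continuous_const)
      hNc.isClosed (show -T ≤ -τ by linarith)
      (by simpa using interior_subset (hYE1 j)) (by simpa using hτ2)
    exact ⟨c, hc1.1, hc2, hc3⟩
  choose cs hcs1 hcs2 hcs3 using hcross
  have hcsT : Tendsto cs atTop atTop := by
    rw [tendsto_atTop]
    intro S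
    have htube : ∀ᶠ w in 𝓝 x, ∀ t ∈ Set.Icc (-(max (-T) S)) T, φ t w ∈ interior N :=
      aux_tube φ isOpen_interior (fun t ht => hN₂N (hT t ht.2))
    filter_upwards [hY.eventually htube] with j hj
    by_contra hSc
    push_neg at hSc
    have hmem : -(cs j) ∈ Set.Icc (-(max (-T) S)) T := by
      constructor
      · have : cs j ≤ max (-T) S := le_max_of_le_right hSc.le
        linarith
      · have := hcs1 j; linarith
    exact (hcs2 j).2 (hj _ hmem)
  have hfrsub : frontier N ⊆ N := by rw [hNc.isClosed.frontier_eq]; exact diff_subset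
  have hfrC : IsCompact (frontier N) := hNc.of_isClosed_subset isClosed_frontier hfrsub
  obtain ⟨p, hpf, g, hg, hpg⟩ := hfrC.tendsto_subseq (x := fun j => φ (-(cs j)) (Y j)) hcs2
  have hcsg : Tendsto (fun j => cs (g j)) atTop atTop := hcsT.comp hg.tendsto_atTop
  have hposN : ∀ s : ℝ, 0 ≤ s → φ s p ∈ N := by
    intro s hs
    have hten : Tendsto (fun j => φ s (φ (-(cs (g j))) (Y (g j)))) atTop (𝓝 (φ s p)) :=
      ((aux_contPt φ s).tendsto p).comp hpg
    refine hNc.isClosed.mem_of_tendsto hten ?_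
    filter_upwards [hcsg.eventually_ge_atTop (s - T)] with j hj
    rw [aux_phi_comp, show s + -(cs (g j)) = -(cs (g j) - s) by ring]
    exact hcs3 (g j) _ ⟨by linarith, by linarith⟩
  have hpA : p ∈ Aset φ K :=
    aux_mem_Aset_of_eventually φ hmax hNc (subset_refl N) (t₀ := 0) hposN
  obtain ⟨z, hz⟩ := hpA.1
  obtain ⟨s', hs'0, hs'V⟩ := aux_omega_frequently φ hz isOpen_interior (hKV₁ (hpA.2 hz)) 0
  have hqten : Tendsto (fun j => φ s' (φ (-(cs (g j))) (Y (g j)))) atTop (𝓝 (φ s' p)) :=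
    ((aux_contPt φ s').tendsto p).comp hpg
  have hqV : ∀ᶠ j in atTop, φ s' (φ (-(cs (g j))) (Y (g j))) ∈ V₁ :=
    (hqten.eventually_mem (isOpen_interior.mem_nhds hs'V)).mono fun j hj => interior_subset hj
  have hfinal : ∀ᶠ j in atTop, Y (g j) ∈ U₁ := by
    filter_upwards [hqV, hcsg.eventually_ge_atTop s'] with j hjV hjc
    rcases hdich _ hjV with hpos | hneg'
    · have hYq : Y (g j) = φ (cs (g j) - s') (φ s' (φ (-(cs (g j))) (Y (g j)))) := by
        rw [aux_phi_comp, aux_phi_comp,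
          show cs (g j) - s' + s' + -(cs (g j)) = 0 by ring, φ.map_zero_apply]
      have hmem : φ (cs (g j) - s') (φ s' (φ (-(cs (g j))) (Y (g j)))) ∈
          posOrbit φ (φ s' (φ (-(cs (g j))) (Y (g j)))) := ⟨cs (g j) - s', by linarith, rfl⟩
      rw [hYq]
      exact hpos hmem
    · exfalso
      have hpq : φ (-s') (φ s' (φ (-(cs (g j))) (Y (g j)))) ∈
          negOrbit φ (φ s' (φ (-(cs (g j))) (Y (g j)))) := ⟨-s', by linarith, rfl⟩
      have heq : φ (-s') (φ s' (φ (-(cs (g j))) (Y (g j)))) = φ (-(cs (g j))) (Y (g j)) :=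
        aux_phi_neg_cancel φ s' _
      have hmem : φ (-(cs (g j))) (Y (g j)) ∈ U₁ := by rw [← heq]; exact hneg' hpq
      exact (hcs2 (g j)).2 ((hU₁sub hmem).1)
  have hxU : x ∈ U₁ := hU₁c.isClosed.mem_of_tendsto (hY.comp hg.tendsto_atTop) hfinal
  exact (hU₁sub hxU).2 rfl
lemma aux_K_subset_H (φ : Flow ℝ M) {K : Set M} (hIso : IsIsolatedInv φ K) :
    K ⊆ Hset φ K := by
  obtain ⟨hKc, hKinv, N, hNc, hKN, hmax⟩ := hIso
  intro x hx
  have hKsubN : K ⊆ N := hKN.trans interior_subset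
  exact ⟨aux_mem_Aset_of_eventually φ hmax hKc hKsubN (t₀ := 0) (fun t _ => hKinv x hx t),
    aux_mem_Rset_of_eventually φ hmax hKc hKsubN (t₀ := 0) (fun t _ => hKinv x hx t)⟩

lemma aux_H_open [LocallyCompactSpace M] (φ : Flow ℝ M) {K : Set M}
    (hIso : IsIsolatedInv φ K) (hNS : NonSaddle φ K) {x : M}
    (hx : x ∈ Hset φ K) (hxK : x ∉ K) : x ∈ interior (Hset φ K) := by
  by_contra hint
  have hxcl : x ∈ closure (Hset φ K)ᶜ := by rw [closure_compl]; exact hint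
  obtain ⟨y, hymem, hylim⟩ := mem_closure_iff_seq_limit.1 hxcl
  have hfreq : (∃ᶠ n in atTop, y n ∉ Aset φ K) ∨ (∃ᶠ n in atTop, y n ∉ Rset φ K) := by
    by_contra hcon
    push_neg at hcon
    have h2 := hcon.2
    obtain ⟨n, hnA, hnR⟩ := (hcon.1.and h2).exists
    exact hymem n ⟨hnA, hnR⟩
  rcases hfreq with hf | hf
  · obtain ⟨g, hg, hgP⟩ := Filter.extraction_of_frequently_atTop hf
    exact (aux_case_forward φ hIso hNS hx.1 hxK (hylim.comp hg.tendsto_atTop) hgP).elim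
  · obtain ⟨g, hg, hgP⟩ := Filter.extraction_of_frequently_atTop hf
    exact (aux_case_backward φ hIso hNS hx.2 hxK (hylim.comp hg.tendsto_atTop) hgP).elim

lemma aux_A_from_orbit (φ : Flow ℝ M) {K N U₁ V₁ : Set M}
    (hmax : ∀ x ∈ N, (∀ t : ℝ, φ t x ∈ N) → x ∈ K) (hU₁c : IsCompact U₁) (hU₁N : U₁ ⊆ N)
    (hdich : ∀ w ∈ V₁, posOrbit φ w ⊆ U₁ ∨ negOrbit φ w ⊆ U₁)
    {w : M} {r : ℝ} (hr : 0 ≤ r) (hwV : φ r w ∈ V₁) (hwU : w ∉ U₁) : w ∈ Aset φ K := by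
  rcases hdich _ hwV with hpos | hneg
  · refine aux_mem_Aset_of_eventually φ hmax hU₁c hU₁N (t₀ := r) ?_
    intro t ht
    have heq : φ t w = φ (t - r) (φ r w) := by
      rw [aux_phi_comp, show t - r + r = t from by ring]
    rw [heq]
    exact hpos ⟨t - r, by linarith, rfl⟩
  · exfalso
    have heq : φ (-r) (φ r w) = w := aux_phi_neg_cancel φ r w
    exact hwU (heq ▸ hneg ⟨-r, by linarith, rfl⟩)

lemma aux_R_from_orbit (φ : Flow ℝ M) {K N U₁ V₁ : Set M}
    (hmax : ∀ x ∈ N, (∀ t : ℝ, φ t x ∈ N) → x ∈ K) (hU₁c : IsCompact U₁) (hU₁N : U₁ ⊆ N)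
    (hdich : ∀ w ∈ V₁, posOrbit φ w ⊆ U₁ ∨ negOrbit φ w ⊆ U₁)
    {w : M} {r : ℝ} (hr : r ≤ 0) (hwV : φ r w ∈ V₁) (hwU : w ∉ U₁) : w ∈ Rset φ K := by
  rcases hdich _ hwV with hpos | hneg
  · exfalso
    have heq : φ (-r) (φ r w) = w := aux_phi_neg_cancel φ r w
    exact hwU (heq ▸ hpos ⟨-r, by linarith, rfl⟩)
  · refine aux_mem_Rset_of_eventually φ hmax hU₁c hU₁N (t₀ := r) ?_
    intro t ht
    have heq : φ t w = φ (t - r) (φ r w) := by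
      rw [aux_phi_comp, show t - r + r = t from by ring]
    rw [heq]
    exact hneg ⟨t - r, by linarith, rfl⟩

lemma aux_diss_closure [LocallyCompactSpace M] (φ : Flow ℝ M) {K : Set M}
    (hIso : IsIsolatedInv φ K) (hNS : NonSaddle φ K) {x : M}
    (hD : Dissonant φ K x) : x ∈ closure (Hset φ K) := by
  by_cases hxK : x ∈ K
  · exact subset_closure (aux_K_subset_H φ hIso hxK)
  obtain ⟨hKc, hKinv, N, hNc, hKN, hmax⟩ := hIso
  have hopen : IsOpen (interior N \ {x}) := isOpen_interior.sdiff isClosed_singleton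
  have hKsub : K ⊆ interior N \ {x} := fun k hk =>
    ⟨hKN hk, fun hkx => hxK (Set.mem_singleton_iff.1 hkx ▸ hk)⟩
  obtain ⟨U₁, hU₁c, hKU₁, hU₁sub⟩ := exists_compact_between hKc hopen hKsub
  obtain ⟨V₁, hKV₁, hV₁U₁, hdich⟩ := hNS U₁ hKU₁
  have hU₁N : U₁ ⊆ N := fun w hw => interior_subset (hU₁sub hw).1
  have hxU₁ : x ∉ U₁ := fun hw => (hU₁sub hw).2 rfl
  rcases hD with ⟨hxI, hxA, k, hkJ, hkK⟩ | ⟨hxI, hxR, k, hkJ, hkK⟩ | ⟨hxI, p, hpJ, hpK⟩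
  · -- positively dissonant : x ∈ R, J⁺ ∩ K ≠ ∅
    have hxR : x ∈ Rset φ K := hxI.resolve_left hxA
    obtain ⟨z, hz⟩ := hxR.1
    obtain ⟨S', hS'0, hS'V⟩ := aux_alpha_frequently φ hz isOpen_interior (hKV₁ (hxR.2 hz)) 0
    obtain ⟨xs, ts, hxs, hts, hconv⟩ := hkJ
    apply mem_closure_of_tendsto hxs
    have hwten : Tendsto (fun n => φ S' (xs n)) atTop (𝓝 (φ S' x)) :=
      ((aux_contPt φ S').tendsto x).comp hxs
    filter_upwards [hts.eventually_ge_atTop 0,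
      hconv.eventually_mem (isOpen_interior.mem_nhds (hKV₁ hkK)),
      hxs.eventually_mem (hU₁c.isClosed.isOpen_compl.mem_nhds hxU₁),
      hwten.eventually_mem (isOpen_interior.mem_nhds hS'V)] with n h1 h2 h3 h4
    exact ⟨aux_A_from_orbit φ hmax hU₁c hU₁N hdich h1 (interior_subset h2) h3,
      aux_R_from_orbit φ hmax hU₁c hU₁N hdich hS'0 (interior_subset h4) h3⟩
  · -- negatively dissonant : x ∈ A, J⁻ ∩ K ≠ ∅
    have hxA : x ∈ Aset φ K := hxI.resolve_right hxR
    obtain ⟨z, hz⟩ := hxA.1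
    obtain ⟨S', hS'0, hS'V⟩ := aux_omega_frequently φ hz isOpen_interior (hKV₁ (hxA.2 hz)) 0
    obtain ⟨xs, ts, hxs, hts, hconv⟩ := hkJ
    apply mem_closure_of_tendsto hxs
    have hwten : Tendsto (fun n => φ S' (xs n)) atTop (𝓝 (φ S' x)) :=
      ((aux_contPt φ S').tendsto x).comp hxs
    filter_upwards [hts.eventually_le_atBot 0,
      hconv.eventually_mem (isOpen_interior.mem_nhds (hKV₁ hkK)),
      hxs.eventually_mem (hU₁c.isClosed.isOpen_compl.mem_nhds hxU₁),
      hwten.eventually_mem (isOpen_interior.mem_nhds hS'V)] with n h1 h2 h3 h4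
    exact ⟨aux_A_from_orbit φ hmax hU₁c hU₁N hdich hS'0 (interior_subset h4) h3,
      aux_R_from_orbit φ hmax hU₁c hU₁N hdich h1 (interior_subset h2) h3⟩
  · -- externally dissonant
    obtain ⟨xs, ts, ss, hxs, hts, hss, hc1, hc2⟩ := hpJ
    apply mem_closure_of_tendsto hxs
    filter_upwards [hts.eventually_ge_atTop 0, hss.eventually_le_atBot 0,
      hc1.eventually_mem (isOpen_interior.mem_nhds (hKV₁ hpK.1)),
      hc2.eventually_mem (isOpen_interior.mem_nhds (hKV₁ hpK.2)),
      hxs.eventually_mem (hU₁c.isClosed.isOpen_compl.mem_nhds hxU₁)] with n h1 h2 h3 h4 h5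
    exact ⟨aux_A_from_orbit φ hmax hU₁c hU₁N hdich h1 (interior_subset h3) h5,
      aux_R_from_orbit φ hmax hU₁c hU₁N hdich h2 (interior_subset h4) h5⟩

lemma aux_diss_notH (φ : Flow ℝ M) {K : Set M} {x : M} (hD : Dissonant φ K x) :
    x ∉ Hset φ K := by
  rcases hD with ⟨_, hxA, _⟩ | ⟨_, hxR, _⟩ | ⟨hxI, _⟩
  · exact fun h => hxA h.1
  · exact fun h => hxR h.2
  · exact fun h => hxI (Or.inl h.1)

end Stmt12Aux

/-- a point `x ∉ K` is dissonant iff it lies in the boundary of `H(K)`;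
consequently `closure H(K) = H(K) ∪ D`. -/
theorem stmt12 {M : Type*} [MetricSpace M] [LocallyCompactSpace M]
    (φ : Flow ℝ M) (K : Set M)
    (hIso : IsIsolatedInv φ K) (hNS : NonSaddle φ K) :
    (∀ x ∉ K, (Dissonant φ K x ↔ x ∈ frontier (Hset φ K))) ∧
    closure (Hset φ K) = Hset φ K ∪ {x | Dissonant φ K x} := by
  have hKc : IsCompact K := hIso.1
  have hKH : K ⊆ Hset φ K := aux_K_subset_H φ hIso
  have clause1 : ∀ x ∉ K, (Dissonant φ K x ↔ x ∈ frontier (Hset φ K)) := by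
    intro x hxK
    constructor
    · intro hD
      exact ⟨aux_diss_closure φ hIso hNS hD,
        fun hin => aux_diss_notH φ hD (interior_subset hin)⟩
    · intro hfr
      have hxH : x ∉ Hset φ K := fun h => hfr.2 (aux_H_open φ hIso hNS h hxK)
      obtain ⟨h, hmem, hlim⟩ := mem_closure_iff_seq_limit.1 hfr.1
      by_cases hxA : x ∈ Aset φ K
      · have hxR : x ∉ Rset φ K := fun hR => hxH ⟨hxA, hR⟩
        exact Or.inr (Or.inl ⟨Or.inl hxA, hxR,
          aux_exists_Jminus φ hKc hlim (fun n => (hmem n).2)⟩)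
      · by_cases hxR : x ∈ Rset φ K
        · exact Or.inl ⟨Or.inr hxR, hxA, aux_exists_Jplus φ hKc hlim (fun n => (hmem n).1)⟩
        · exact Or.inr (Or.inr ⟨fun h => h.elim hxA hxR, aux_exists_Jstar φ hKc hlim hmem⟩)
  refine ⟨clause1, Set.Subset.antisymm ?_ ?_⟩
  · intro z hz
    by_cases hzH : z ∈ Hset φ K
    · exact Or.inl hzH
    · have hzK : z ∉ K := fun h => hzH (hKH h)
      exact Or.inr ((clause1 z hzK).2 ⟨hz, fun hin => hzH (interior_subset hin)⟩)
  · rintro z (hz | hz)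
    · exact subset_closure hz
    · exact aux_diss_closure φ hIso hNS hz
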